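/- Let ρ : G → GL(n, ℤ) be a representation of a finite group whose real extension is absolutely irreducible, with invariant Gram matrix S (so ρ(g)ᵀ S ρ(g) = S for all g). If Z = W + iY ∈ 𝓗ₙ (W, Y real symmetric, Y positive definite) satisfies ρ(g)·Z·ρ(g)ᵀ = Z for all g ∈ G, then there exists τ ∈ ℂ with Im τ > 0 such that Z = τ·S⁻¹. -/

import Mathlib

open Matrix

/-- Schur: a matrix commuting with all matrices of an irreducible family is scalar. -/
lemma schur_scalar_aux {G : Type*} {n : ℕ} (hn : n ≠ 0)
    (P : G → Matrix (Fin n) (Fin n) ℂ)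
    (habs : ∀ Wsub : Submodule ℂ (Fin n → ℂ),
      (∀ (g : G) (v : Fin n → ℂ), v ∈ Wsub → (P g).mulVec v ∈ Wsub) → Wsub = ⊥ ∨ Wsub = ⊤)
    (A : Matrix (Fin n) (Fin n) ℂ) (hA : ∀ g, P g * A = A * P g) :
    ∃ τ : ℂ, A = τ • 1 := by
  haveI : NeZero n := ⟨hn⟩
  haveI : Nontrivial (Fin n → ℂ) := by
    have : Nonempty (Fin n) := ⟨⟨0, Nat.pos_of_ne_zero hn⟩⟩
    infer_instance
  obtain ⟨μ, hμ⟩ := Module.End.exists_eigenvalue (Matrix.mulVecLin A)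
  obtain ⟨v, hv⟩ := hμ.exists_hasEigenvector
  refine ⟨μ, ?_⟩
  set B : Matrix (Fin n) (Fin n) ℂ := A - μ • 1 with hB
  have hBcomm : ∀ g, P g * B = B * P g := by
    intro g
    have h1 : Commute (P g) A := hA g
    have h2 : Commute (P g) (μ • (1 : Matrix (Fin n) (Fin n) ℂ)) :=
      (Commute.one_right (P g)).smul_right μ
    exact (h1.sub_right h2).eq
  set K : Submodule ℂ (Fin n → ℂ) := LinearMap.ker B.mulVecLin with hK
  have hvK : v ∈ K := by
    have h1 : A.mulVec v = μ • v := hv.apply_eq_smul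
    simp only [hK, LinearMap.mem_ker, Matrix.mulVecLin_apply, hB, Matrix.sub_mulVec,
      Matrix.smul_mulVec, Matrix.one_mulVec, h1, sub_self]
  have hinv : ∀ (g : G) (w : Fin n → ℂ), w ∈ K → (P g).mulVec w ∈ K := by
    intro g w hw
    simp only [hK, LinearMap.mem_ker, Matrix.mulVecLin_apply] at hw ⊢
    rw [Matrix.mulVec_mulVec, ← hBcomm g, ← Matrix.mulVec_mulVec, hw, Matrix.mulVec_zero]
  rcases habs K hinv with hbot | htop
  · exact absurd (hbot ▸ hvK) (by simpa using hv.2)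
  · have hB0 : B = 0 := by
      ext i j
      have : B.mulVec (Pi.single j 1) = 0 := by
        have := htop ▸ (Submodule.mem_top (x := Pi.single j (1:ℂ)) (R := ℂ))
        simpa [hK, LinearMap.mem_ker, Matrix.mulVecLin_apply] using
          (htop ▸ (Submodule.mem_top : Pi.single j (1:ℂ) ∈ (⊤ : Submodule ℂ (Fin n → ℂ))) : Pi.single j (1:ℂ) ∈ K)
      have := congrFun this i
      simpa [Matrix.mulVec_single] using this
    have := sub_eq_zero.mp (hB ▸ hB0)
    exact this

/-- Let ρ : G → GL(n,ℤ) be an integral representation of a finite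
group whose complexification is irreducible (absolute irreducibility), with
invariant positive definite Gram matrix S (ρ(g)ᵀSρ(g) = S).  If Z = W + iY is in
the Siegel upper half-space (W, Y real symmetric, Y positive definite) and
ρ(g)·Z·ρ(g)ᵀ = Z for all g, then Z = τ·S⁻¹ for some τ ∈ ℂ with Im τ > 0. -/
theorem fixed_siegel_point_is_scalar_multiple
    {G : Type*} [Group G] [Finite G] {n : ℕ}
    (ρ : G →* Matrix (Fin n) (Fin n) ℤ)
    (habs : ∀ Wsub : Submodule ℂ (Fin n → ℂ),
      (∀ (g : G) (v : Fin n → ℂ), v ∈ Wsub →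
        ((ρ g).map (fun x : ℤ => (x : ℂ))).mulVec v ∈ Wsub) → Wsub = ⊥ ∨ Wsub = ⊤)
    (S : Matrix (Fin n) (Fin n) ℝ) (hSpos : S.PosDef)
    (hSinv : ∀ g : G,
      ((ρ g).map (fun k : ℤ => (k : ℝ)))ᵀ * S * (ρ g).map (fun k : ℤ => (k : ℝ)) = S)
    (W Y : Matrix (Fin n) (Fin n) ℝ)
    (hWsym : Wᵀ = W) (hYsym : Yᵀ = Y) (hYpos : Y.PosDef)
    (hfix : ∀ g : G,
      (ρ g).map (fun k : ℤ => (k : ℂ)) *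
          (W.map (fun x : ℝ => (x : ℂ)) + Complex.I • Y.map (fun x : ℝ => (x : ℂ))) *
          ((ρ g).map (fun k : ℤ => (k : ℂ)))ᵀ =
        W.map (fun x : ℝ => (x : ℂ)) + Complex.I • Y.map (fun x : ℝ => (x : ℂ))) :
    ∃ τ : ℂ, 0 < τ.im ∧
      W.map (fun x : ℝ => (x : ℂ)) + Complex.I • Y.map (fun x : ℝ => (x : ℂ)) =
        τ • (S⁻¹).map (fun x : ℝ => (x : ℂ)) := by
  classical
  by_cases hn : n = 0
  · subst hn
    exact ⟨Complex.I, by norm_num, by ext i j; exact i.elim0⟩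
  set Z : Matrix (Fin n) (Fin n) ℂ :=
    W.map (fun x : ℝ => (x : ℂ)) + Complex.I • Y.map (fun x : ℝ => (x : ℂ)) with hZ
  set P : G → Matrix (Fin n) (Fin n) ℂ := fun g => (ρ g).map (fun k : ℤ => (k : ℂ)) with hP
  set Sc : Matrix (Fin n) (Fin n) ℂ := S.map (fun x : ℝ => (x : ℂ)) with hSc
  -- map commutes
  have hmapmul : ∀ (g : G), ((ρ g).map (fun k : ℤ => (k : ℝ))).map (fun x : ℝ => (x : ℂ))
      = P g := by
    intro g
    ext i j
    simp [hP, Matrix.map_apply]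
  have hic : (fun k : ℤ => (k : ℂ)) = ⇑(Int.castRingHom ℂ) := rfl
  have hrc : (fun x : ℝ => (x : ℂ)) = ⇑(Complex.ofRealHom) := rfl
  have hPmul : ∀ g h : G, P g * P h = P (g * h) := by
    intro g h
    show (Int.castRingHom ℂ).mapMatrix (ρ g) * (Int.castRingHom ℂ).mapMatrix (ρ h)
        = (Int.castRingHom ℂ).mapMatrix (ρ (g * h))
    rw [_root_.map_mul ρ, _root_.map_mul]
  have hPone : P 1 = 1 := by
    show (Int.castRingHom ℂ).mapMatrix (ρ 1) = 1
    rw [_root_.map_one ρ, _root_.map_one]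
  have hPinv : ∀ g : G, P g * P g⁻¹ = 1 := fun g => by rw [hPmul, mul_inv_cancel, hPone]
  have hPinv' : ∀ g : G, P g⁻¹ * P g = 1 := fun g => by rw [hPmul, inv_mul_cancel, hPone]
  -- complexified invariance of S
  have hSinvC : ∀ g : G, (P g)ᵀ * Sc * P g = Sc := by
    intro g
    have hmm : ((ρ g).map (fun k : ℤ => (k : ℝ))).map ⇑Complex.ofRealHom = P g := hmapmul g
    have h0 := congrArg Complex.ofRealHom.mapMatrix (hSinv g)
    simp only [_root_.map_mul, RingHom.mapMatrix_apply] at h0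
    rw [Matrix.transpose_map, hmm] at h0
    exact h0
  -- key relations
  have hSP : ∀ g : G, (P g⁻¹)ᵀ * Sc = Sc * P g := by
    intro g
    calc (P g⁻¹)ᵀ * Sc = (P g⁻¹)ᵀ * ((P g)ᵀ * Sc * P g) := by rw [hSinvC g]
    _ = ((P g * P g⁻¹)ᵀ * Sc) * P g := by
        rw [Matrix.transpose_mul]; noncomm_ring
    _ = Sc * P g := by rw [hPinv g, Matrix.transpose_one, Matrix.one_mul]
  have hZP : ∀ g : G, P g * Z = Z * (P g⁻¹)ᵀ := by
    intro g
    calc P g * Z = P g * (P g⁻¹ * Z * (P g⁻¹)ᵀ) := by rw [hfix g⁻¹]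
    _ = (P g * P g⁻¹) * Z * (P g⁻¹)ᵀ := by noncomm_ring
    _ = Z * (P g⁻¹)ᵀ := by rw [hPinv g, Matrix.one_mul]
  -- A = Z * Sc commutes with all P g
  have hcomm : ∀ g : G, P g * (Z * Sc) = (Z * Sc) * P g := by
    intro g
    calc P g * (Z * Sc) = (P g * Z) * Sc := by rw [Matrix.mul_assoc]
    _ = Z * ((P g⁻¹)ᵀ * Sc) := by rw [hZP g, Matrix.mul_assoc]
    _ = (Z * Sc) * P g := by rw [hSP g, Matrix.mul_assoc]
  obtain ⟨τ, hτ⟩ := schur_scalar_aux hn P habs (Z * Sc) hcomm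
  -- Sc is invertible with inverse (S⁻¹).map
  have hSdet : IsUnit S.det := isUnit_iff_ne_zero.mpr hSpos.det_pos.ne'
  have hScinv : Sc * (S⁻¹).map (fun x : ℝ => (x : ℂ)) = 1 := by
    have h1 : S * S⁻¹ = 1 := Matrix.mul_nonsing_inv S hSdet
    have h0 := congrArg Complex.ofRealHom.mapMatrix h1
    simp only [_root_.map_mul, _root_.map_one, RingHom.mapMatrix_apply] at h0
    exact h0
  have hZeq : Z = τ • (S⁻¹).map (fun x : ℝ => (x : ℂ)) := by
    calc Z = Z * (Sc * (S⁻¹).map (fun x : ℝ => (x : ℂ))) := by rw [hScinv, Matrix.mul_one]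
    _ = (Z * Sc) * (S⁻¹).map (fun x : ℝ => (x : ℂ)) := by rw [Matrix.mul_assoc]
    _ = (τ • (1 : Matrix (Fin n) (Fin n) ℂ)) * (S⁻¹).map (fun x : ℝ => (x : ℂ)) := by rw [hτ]
    _ = τ • (S⁻¹).map (fun x : ℝ => (x : ℂ)) := by rw [Matrix.smul_mul, Matrix.one_mul]
  refine ⟨τ, ?_, hZeq⟩
  -- positivity of Im τ from a diagonal entry
  have i : Fin n := ⟨0, Nat.pos_of_ne_zero hn⟩
  have hSipos : 0 < S⁻¹ i i := by
    have h := hSpos.inv.dotProduct_mulVec_pos (x := Pi.single i 1) (by intro h; have := congrFun h i; simp [Pi.single_eq_same] at this)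
    simpa [dotProduct, Matrix.mulVec, Pi.single_apply, Finset.sum_ite_eq,
      Finset.sum_ite_eq'] using h
  have hYipos : 0 < Y i i := by
    have h := hYpos.dotProduct_mulVec_pos (x := Pi.single i 1) (by intro h; have := congrFun h i; simp [Pi.single_eq_same] at this)
    simpa [dotProduct, Matrix.mulVec, Pi.single_apply, Finset.sum_ite_eq,
      Finset.sum_ite_eq'] using h
  have hentry := congrFun (congrFun hZeq i) i
  have him : Y i i = τ.im * S⁻¹ i i := by
    have := congrArg Complex.im hentry
    simpa [hZ, Matrix.add_apply, Matrix.smul_apply, Matrix.map_apply, Complex.add_im,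
      Complex.mul_im, Complex.ofReal_im, Complex.ofReal_re, Complex.I_im, Complex.I_re,
      smul_eq_mul] using this
  nlinarith [hYipos, hSipos, him]
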